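/- Let p and q be relatively prime positive integers and let E_{ij} be a p×q 0-1 matrix with exactly one nonzero entry. Then the (p+q)×(p+q) block matrix B = [[C_p, E_{ij}],[0, C_q]] has stable index exactly pq: the powers B, B², …, B^{pq} are all 0-1 matrices, and B^{pq+1} has an entry greater than 1. -/

import Mathlib

/-- A matrix over ℕ is a 0-1 matrix iff all its entries are at most 1. -/
def IsZO {α β : Type*} (A : Matrix α β ℕ) : Prop := ∀ i j, A i j ≤ 1

/-- The stable index of a 0-1 matrix: the smallest positive `k` with `A ^ (k+1)`
not a 0-1 matrix, or `⊤` if no such `k` exists. -/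
noncomputable def theta {α : Type*} [Fintype α] [DecidableEq α]
    (A : Matrix α α ℕ) : ℕ∞ :=
  sInf ((fun k : ℕ => (k : ℕ∞)) '' {k : ℕ | 1 ≤ k ∧ ¬ IsZO (A ^ (k + 1))})

/-- `g(n)` from the paper. -/
def g (n : ℕ) : ℕ :=
  if n % 2 = 1 then (n ^ 2 - 1) / 4
  else if n % 4 = 0 then (n ^ 2 - 4) / 4
  else (n ^ 2 - 16) / 4

/-- Basic circulant 0-1 matrix of order `n`. -/
def Cmat (n : ℕ) : Matrix (Fin n) (Fin n) ℕ :=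
  Matrix.of fun i j => if (j : ℕ) = ((i : ℕ) + 1) % n then 1 else 0

/-- Condition (★) on `(n, p, q)`. -/
def StarCond (n p q : ℕ) : Prop :=
  p + q = n ∧
  ((n % 2 = 1 ∧ ({p, q} : Finset ℕ) = {(n + 1) / 2, (n - 1) / 2}) ∨
   (n % 4 = 0 ∧ ({p, q} : Finset ℕ) = {(n + 2) / 2, (n - 2) / 2}) ∨
   (n % 4 = 2 ∧ ({p, q} : Finset ℕ) = {(n + 4) / 2, (n - 4) / 2}))

open Fin.NatCast

lemma Cmat_eq (n : ℕ) [NeZero n] :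
    Cmat n = Matrix.of fun i j => if j = i + 1 then 1 else 0 := by
  ext i j
  simp only [Cmat, Matrix.of_apply]
  congr 1
  simp [Fin.ext_iff, Fin.val_add, Fin.val_one', Nat.add_mod]

lemma Cmat_pow (n : ℕ) [NeZero n] (k : ℕ) :
    Cmat n ^ k = Matrix.of fun i j => if j = i + (k : Fin n) then 1 else 0 := by
  induction k with
  | zero => ext i j; simp [Matrix.one_apply, eq_comm]
  | succ k ih =>
      rw [pow_succ, ih, Cmat_eq]
      ext i j
      simp only [Matrix.mul_apply, Matrix.of_apply]
      rw [Finset.sum_eq_single (i + (k : Fin n))]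
      · simp [add_assoc]
      · intro b _ hb; simp [if_neg hb]
      · simp

lemma blocks_pow {p q : ℕ} (A : Matrix (Fin p) (Fin p) ℕ) (E : Matrix (Fin p) (Fin q) ℕ)
    (D : Matrix (Fin q) (Fin q) ℕ) (m : ℕ) :
    (Matrix.fromBlocks A E 0 D) ^ m =
      Matrix.fromBlocks (A ^ m) (∑ k ∈ Finset.range m, A ^ k * E * D ^ (m - 1 - k)) 0 (D ^ m) := by
  induction m with
  | zero => simp [Matrix.fromBlocks_one]
  | succ m ih =>
      rw [pow_succ, ih, pow_succ, pow_succ, Matrix.fromBlocks_multiply]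
      have hoff : A ^ m * E + (∑ k ∈ Finset.range m, A ^ k * E * D ^ (m - 1 - k)) * D
          = ∑ k ∈ Finset.range (m + 1), A ^ k * E * D ^ (m + 1 - 1 - k) := by
        rw [Finset.sum_range_succ]
        rw [Matrix.sum_mul]
        rw [Nat.add_sub_cancel, Nat.sub_self, pow_zero, Matrix.mul_one, add_comm]
        congr 1
        refine Finset.sum_congr rfl fun k hk => ?_
        rw [Finset.mem_range] at hk
        rw [Matrix.mul_assoc, ← pow_succ]
        congr 2
        omega
      rw [Matrix.mul_zero, Matrix.zero_mul, Matrix.zero_mul, add_zero, zero_add, hoff]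
      rw [Matrix.mul_zero, zero_add]

lemma entry_lem {p q : ℕ} [NeZero p] [NeZero q] (E : Matrix (Fin p) (Fin q) ℕ)
    (a b : ℕ) (x : Fin p) (y : Fin q) :
    (Cmat p ^ a * E * Cmat q ^ b) x y = E (x + (a : Fin p)) (y - (b : Fin q)) := by
  rw [Cmat_pow, Cmat_pow]
  simp only [Matrix.mul_apply, Matrix.of_apply]
  rw [Finset.sum_eq_single (y - (b : Fin q))]
  · rw [Finset.sum_eq_single (x + (a : Fin p))]
    · rw [if_pos rfl, one_mul, if_pos (by abel), mul_one]
    · intro c _ hc; rw [if_neg hc, zero_mul]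
    · simp
  · intro c _ hc
    rw [if_neg (by intro h; apply hc; rw [h]; abel), mul_zero]
  · simp

lemma off_entry {p q : ℕ} [NeZero p] [NeZero q] (E : Matrix (Fin p) (Fin q) ℕ)
    (m : ℕ) (x : Fin p) (y : Fin q) :
    ((Matrix.fromBlocks (Cmat p) E 0 (Cmat q)) ^ m) (Sum.inl x) (Sum.inr y)
      = ∑ k ∈ Finset.range m, E (x + (k : Fin p)) (y - ((m - 1 - k : ℕ) : Fin q)) := by
  rw [blocks_pow]
  simp only [Matrix.fromBlocks_apply₁₂]
  rw [Matrix.sum_apply]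
  exact Finset.sum_congr rfl fun k _ => entry_lem E k (m - 1 - k) x y

theorem stmt_15 (p q : ℕ) (hp : 0 < p) (hq : 0 < q) (hpq : Nat.Coprime p q)
    (E : Matrix (Fin p) (Fin q) ℕ) (hE : IsZO E)
    (hone : ∃! ij : Fin p × Fin q, E ij.1 ij.2 ≠ 0) :
    theta (Matrix.fromBlocks (Cmat p) E 0 (Cmat q)) = (p * q : ℕ∞) ∧
    (∀ m : ℕ, 1 ≤ m → m ≤ p * q →
      IsZO ((Matrix.fromBlocks (Cmat p) E 0 (Cmat q)) ^ m)) ∧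
    (∃ i j, 1 < ((Matrix.fromBlocks (Cmat p) E 0 (Cmat q)) ^ (p * q + 1)) i j) := by
  haveI : NeZero p := ⟨hp.ne'⟩
  haveI : NeZero q := ⟨hq.ne'⟩
  obtain ⟨⟨i, j⟩, hij, huni⟩ := hone
  have hE1 : E i j = 1 := Nat.le_antisymm (hE i j) (Nat.one_le_iff_ne_zero.mpr hij)
  have hEind : ∀ z w, E z w = if z = i ∧ w = j then 1 else 0 := by
    intro z w
    by_cases h : z = i ∧ w = j
    · rw [if_pos h, h.1, h.2, hE1]
    · rw [if_neg h]
      by_contra hzw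
      have := huni (z, w) hzw
      simp only [Prod.mk.injEq] at this
      exact h this
  -- the off-diagonal entry as a cardinality
  have hcard : ∀ (m : ℕ) (x : Fin p) (y : Fin q),
      ((Matrix.fromBlocks (Cmat p) E 0 (Cmat q)) ^ m) (Sum.inl x) (Sum.inr y)
        = ((Finset.range m).filter
            (fun k : ℕ => x + ((k : ℕ) : Fin p) = i ∧ y - ((m - 1 - k : ℕ) : Fin q) = j)).card := by
    intro m x y
    rw [off_entry]
    rw [Finset.sum_congr rfl fun k _ => hEind _ _]
    rw [Finset.sum_boole]
    simp
  -- all powers up to p*q are 0-1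
  have hsmall : ∀ m : ℕ, m ≤ p * q →
      IsZO ((Matrix.fromBlocks (Cmat p) E 0 (Cmat q)) ^ m) := by
    intro m hm
    rintro (x | x) (y | y)
    · rw [blocks_pow]
      simp only [Matrix.fromBlocks_apply₁₁]
      rw [Cmat_pow]
      simp only [Matrix.of_apply]
      split <;> simp
    · rw [hcard]
      rw [Finset.card_le_one]
      rintro k₁ hk₁ k₂ hk₂
      simp only [Finset.mem_filter, Finset.mem_range] at hk₁ hk₂
      obtain ⟨hk₁m, hx₁, hy₁⟩ := hk₁
      obtain ⟨hk₂m, hx₂, hy₂⟩ := hk₂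
      have hfp : ((k₁ : Fin p)) = (k₂ : Fin p) := by
        have := hx₁.trans hx₂.symm
        exact add_left_cancel this
      have hmp : k₁ % p = k₂ % p := by
        have := congrArg Fin.val hfp
        rwa [Fin.val_natCast, Fin.val_natCast] at this
      have hfq : ((m - 1 - k₁ : ℕ) : Fin q) = ((m - 1 - k₂ : ℕ) : Fin q) := by
        have := hy₁.trans hy₂.symm
        exact sub_right_injective this
      have hmq' : (m - 1 - k₁) % q = (m - 1 - k₂) % q := by
        have := congrArg Fin.val hfq
        rwa [Fin.val_natCast, Fin.val_natCast] at this
      have hmq : k₁ % q = k₂ % q := by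
        have h1 : Nat.ModEq q (m - 1 - k₁) (m - 1 - k₂) := hmq'
        have h2 : Nat.ModEq q (m - 1 - k₁ + (k₁ + k₂)) (m - 1 - k₂ + (k₁ + k₂)) :=
          h1.add_right _
        have e1 : m - 1 - k₁ + (k₁ + k₂) = (m - 1) + k₂ := by omega
        have e2 : m - 1 - k₂ + (k₁ + k₂) = (m - 1) + k₁ := by omega
        rw [e1, e2] at h2
        exact (Nat.ModEq.add_left_cancel' (m - 1) h2).symm
      have hpq' : k₁ % (p * q) = k₂ % (p * q) :=
        (Nat.modEq_and_modEq_iff_modEq_mul hpq).mp ⟨hmp, hmq⟩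
      rw [Nat.mod_eq_of_lt (lt_of_lt_of_le hk₁m hm),
        Nat.mod_eq_of_lt (lt_of_lt_of_le hk₂m hm)] at hpq'
      exact hpq'
    · rw [blocks_pow]; simp
    · rw [blocks_pow]
      simp only [Matrix.fromBlocks_apply₂₂]
      rw [Cmat_pow]
      simp only [Matrix.of_apply]
      split <;> simp
  -- the big entry at p*q + 1
  have hbig : 1 < ((Matrix.fromBlocks (Cmat p) E 0 (Cmat q)) ^ (p * q + 1))
      (Sum.inl i) (Sum.inr j) := by
    rw [hcard]
    have hsub : ({0, p * q} : Finset ℕ) ⊆ (Finset.range (p * q + 1)).filter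
        (fun k : ℕ => i + ((k : ℕ) : Fin p) = i ∧ j - ((p * q + 1 - 1 - k : ℕ) : Fin q) = j) := by
      intro k hk
      simp only [Finset.mem_insert, Finset.mem_singleton] at hk
      simp only [Finset.mem_filter, Finset.mem_range]
      have hcq : ((p * q : ℕ) : Fin q) = 0 := by
        push_cast
        simp [Fin.natCast_self]
      have hcp : ((p * q : ℕ) : Fin p) = 0 := by
        push_cast
        simp [Fin.natCast_self]
      rcases hk with rfl | rfl
      · refine ⟨by omega, by simp, ?_⟩
        rw [Nat.sub_zero, Nat.add_sub_cancel, hcq, sub_zero]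
      · refine ⟨by omega, by rw [hcp, add_zero], ?_⟩
        rw [Nat.add_sub_cancel, Nat.sub_self, Nat.cast_zero, sub_zero]
    have h2 : ({0, p * q} : Finset ℕ).card = 2 := by
      rw [Finset.card_insert_of_notMem (by simpa using (Nat.mul_pos hp hq).ne), Finset.card_singleton]
    have := Finset.card_le_card hsub
    omega
  have hnot : ¬ IsZO ((Matrix.fromBlocks (Cmat p) E 0 (Cmat q)) ^ (p * q + 1)) := by
    intro h
    exact absurd (h (Sum.inl i) (Sum.inr j)) (by omega)
  have hppq : 1 ≤ p * q := Nat.one_le_iff_ne_zero.mpr (Nat.mul_ne_zero hp.ne' hq.ne')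
  refine ⟨?_, fun m h1 h2 => hsmall m h2, ⟨Sum.inl i, Sum.inr j, hbig⟩⟩
  unfold theta
  apply le_antisymm
  · exact sInf_le ⟨p * q, ⟨hppq, hnot⟩, rfl⟩
  · apply le_sInf
    rintro b ⟨k, ⟨hk1, hk2⟩, rfl⟩
    have hk : p * q ≤ k := by
      by_contra hlt
      push_neg at hlt
      exact hk2 (hsmall (k + 1) (by omega))
    simp only []
    exact_mod_cast hk
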